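/- If G ⊆ 2^{[n]} is r-wise t-intersecting, then σ_{i,j}(G) is also r-wise t-intersecting, for any 1 ≤ i, j ≤ n. -/

import Mathlib

open Finset

/-- p-biased measure of a family on ground set of size `n` (= `[n]`). -/
def mu (p : ℝ) (n : ℕ) (G : Finset (Finset ℕ)) : ℝ :=
  ∑ A ∈ G, p ^ A.card * (1 - p) ^ (n - A.card)

/-- p-biased measure of a family on an arbitrary finite ground set `X`. -/
def muOn (p : ℝ) (X : Finset ℕ) (G : Finset (Finset ℕ)) : ℝ :=
  ∑ A ∈ G, p ^ A.card * (1 - p) ^ (X.card - A.card)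

/-- `F_0^t = {F ⊆ [n] : [t] ⊆ F}`. -/
def F0 (n t : ℕ) : Finset (Finset ℕ) :=
  (Finset.Icc 1 n).powerset.filter (fun F => Finset.Icc 1 t ⊆ F)

/-- `F_1^t = {F ⊆ [n] : |F ∩ [t+3]| ≥ t+2}`. -/
def F1 (n t : ℕ) : Finset (Finset ℕ) :=
  (Finset.Icc 1 n).powerset.filter (fun F => t + 2 ≤ (F ∩ Finset.Icc 1 (t + 3)).card)

/-- `F_2^t = {F ⊆ [n] : |F ∩ [t+6]| ≥ t+4}`. -/
def F2 (n t : ℕ) : Finset (Finset ℕ) :=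
  (Finset.Icc 1 n).powerset.filter (fun F => t + 4 ≤ (F ∩ Finset.Icc 1 (t + 6)).card)

/-- `p_0(t) = 2/(√(4t+9) − 1)`. -/
noncomputable def p0 (t : ℕ) : ℝ := 2 / (Real.sqrt (4 * t + 9) - 1)

/-- The family is `r`-wise `t`-intersecting: any `r` members (with repetition)
intersect in at least `t` elements. -/
def RWise (r t : ℕ) (G : Finset (Finset ℕ)) : Prop :=
  ∀ f : Fin r → Finset ℕ, (∀ k, f k ∈ G) → t ≤ (⋂ k, (f k : Set ℕ)).ncard

/-- The shift `s_{i,j}` of a single set `A`, relative to the family `G`. -/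
def shiftSet (i j : ℕ) (G : Finset (Finset ℕ)) (A : Finset ℕ) : Finset ℕ :=
  if A ∩ {i, j} = {j} ∧ (A.erase j ∪ {i}) ∉ G then A.erase j ∪ {i} else A

/-- The shifting operation `σ_{i,j}` applied to a family. -/
def shift (i j : ℕ) (G : Finset (Finset ℕ)) : Finset (Finset ℕ) :=
  G.image (shiftSet i j G)

/-- `G` and `H` are isomorphic as families on ground set `[n]`:
`H` is the image of `G` under a permutation preserving `[n]`. -/
def Iso (n : ℕ) (G H : Finset (Finset ℕ)) : Prop :=
  ∃ τ : Equiv.Perm ℕ, (∀ x, x ∈ Finset.Icc 1 n ↔ τ x ∈ Finset.Icc 1 n) ∧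
    H = G.image (fun A => A.image τ)

/-- `G` is `(3,t)`-maximal on `[n]`. -/
def Max3 (n t : ℕ) (G : Finset (Finset ℕ)) : Prop :=
  (∀ A ∈ G, A ⊆ Finset.Icc 1 n) ∧ RWise 3 t G ∧
    ∀ F : Finset ℕ, F ⊆ Finset.Icc 1 n → F ∉ G → ¬ RWise 3 t (insert F G)

/-- `G` is shifted on `[n]`. -/
def Shifted (n : ℕ) (G : Finset (Finset ℕ)) : Prop :=
  ∀ i j : ℕ, 1 ≤ i → i < j → j ≤ n → shift i j G = G

/-- One shifting step. -/
def ShiftStep (n : ℕ) (G H : Finset (Finset ℕ)) : Prop :=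
  ∃ i j : ℕ, 1 ≤ i ∧ i ≤ n ∧ 1 ≤ j ∧ j ≤ n ∧ H = shift i j G

theorem stmt_6 (n r t : ℕ) (G : Finset (Finset ℕ)) (hG : ∀ A ∈ G, A ⊆ Finset.Icc 1 n)
    (i j : ℕ) (hi : 1 ≤ i) (hin : i ≤ n) (hj : 1 ≤ j) (hjn : j ≤ n)
    (h : RWise r t G) : RWise r t (shift i j G) := by
  by_cases hij : i = j
  · subst hij
    have hid : shift i i G = G := by
      unfold shift
      have hss : ∀ A ∈ G, shiftSet i i G A = A := by
        intro A hA
        unfold shiftSet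
        rw [if_neg]
        rintro ⟨h1, h2⟩
        have hiA : i ∈ A := by
          have : i ∈ A ∩ ({i, i} : Finset ℕ) := by rw [h1]; simp
          exact (Finset.mem_inter.1 this).1
        apply h2
        have heq : A.erase i ∪ {i} = A := by
          ext x
          simp only [Finset.mem_union, Finset.mem_erase, Finset.mem_singleton]
          constructor
          · rintro (⟨_, hx⟩ | rfl)
            · exact hx
            · exact hiA
          · intro hx
            by_cases hxi : x = i
            · exact Or.inr hxi
            · exact Or.inl ⟨hxi, hx⟩
        rw [heq]; exact hA
      calc G.image (shiftSet i i G) = G.image id := Finset.image_congr (fun A hA => hss A hA)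
        _ = G := Finset.image_id
    rw [hid]; exact h
  -- main case: i ≠ j
  intro f hf
  have hA : ∀ k, ∃ A, A ∈ G ∧ shiftSet i j G A = f k := by
    intro k
    have := hf k
    simp only [shift, Finset.mem_image] at this
    obtain ⟨A, hA1, hA2⟩ := this
    exact ⟨A, hA1, hA2⟩
  choose A hAG hAf using hA
  -- facts about moved k
  have hcond : ∀ k, f k ≠ A k →
      j ∈ A k ∧ i ∉ A k ∧ f k = (A k).erase j ∪ {i} ∧ ((A k).erase j ∪ {i}) ∉ G := by
    intro k hk
    have hs := hAf k
    unfold shiftSet at hs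
    by_cases hc : A k ∩ {i, j} = {j} ∧ ((A k).erase j ∪ {i}) ∉ G
    · rw [if_pos hc] at hs
      have hjA : j ∈ A k := by
        have : j ∈ A k ∩ ({i, j} : Finset ℕ) := by rw [hc.1]; simp
        exact (Finset.mem_inter.1 this).1
      have hiA : i ∉ A k := by
        intro hiA
        have : i ∈ A k ∩ ({i, j} : Finset ℕ) := Finset.mem_inter.2 ⟨hiA, by simp⟩
        rw [hc.1] at this
        exact hij (Finset.mem_singleton.1 this)
      exact ⟨hjA, hiA, hs.symm, hc.2⟩
    · rw [if_neg hc] at hs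
      exact absurd hs.symm hk
  -- a key fact for unmoved k with j ∈ f k, i ∉ f k
  have hkey : ∀ k, f k = A k → i ∉ f k → j ∈ f k → ((f k).erase j ∪ {i}) ∈ G := by
    intro k hk hik hjk
    have hs := hAf k
    unfold shiftSet at hs
    by_contra hB
    have hc : A k ∩ {i, j} = {j} ∧ ((A k).erase j ∪ {i}) ∉ G := by
      constructor
      · ext x
        simp only [Finset.mem_inter, Finset.mem_insert, Finset.mem_singleton]
        constructor
        · rintro ⟨hx1, hx2 | hx2⟩
          · subst hx2; rw [← hk] at hx1; exact absurd hx1 hik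
          · exact hx2
        · rintro rfl; exact ⟨hk ▸ hjk, Or.inr rfl⟩
      · rw [← hk]; exact hB
    rw [if_pos hc] at hs
    have : j ∈ (A k).erase j ∪ ({i} : Finset ℕ) := by rw [hs]; exact hjk
    simp only [Finset.mem_union, Finset.mem_erase, Finset.mem_singleton] at this
    rcases this with ⟨hne, _⟩ | hji
    · exact hne rfl
    · exact hij hji.symm
  by_cases hmov : ∀ k, f k = A k
  · have : ∀ k, f k ∈ G := fun k => (hmov k) ▸ hAG k
    exact h f this
  push_neg at hmov
  obtain ⟨k0, hk0⟩ := hmov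
  obtain ⟨hjA0, hiA0, hf0, _⟩ := hcond k0 hk0
  have hif0 : i ∈ f k0 := by rw [hf0]; simp
  have hfinF : (⋂ k, ((f k : Finset ℕ) : Set ℕ)).Finite :=
    Set.Finite.subset (f k0).finite_toSet (Set.iInter_subset _ k0)
  -- x in all A k, x ≠ j implies x in all f k
  have hAtoF : ∀ (x : ℕ) k, x ∈ A k → x ≠ j → x ∈ f k := by
    intro x k hx hxj
    by_cases hm : f k = A k
    · rw [hm]; exact hx
    · obtain ⟨_, _, hfk, _⟩ := hcond k hm
      rw [hfk]
      exact Finset.mem_union.2 (Or.inl (Finset.mem_erase.2 ⟨hxj, hx⟩))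
  by_cases hall : ∀ k, i ∈ f k
  · -- Case 1: i in every f k
    set T : Set ℕ := ⋂ k, ((A k : Finset ℕ) : Set ℕ) with hT
    have hTt : t ≤ T.ncard := h A hAG
    have hTfin : T.Finite := Set.Finite.subset (A k0).finite_toSet (Set.iInter_subset _ k0)
    have hiT : i ∉ T := fun hiT => hiA0 (by exact_mod_cast Set.mem_iInter.1 hiT k0)
    have hsub : insert i (T \ {j}) ⊆ ⋂ k, ((f k : Finset ℕ) : Set ℕ) := by
      intro x hx
      rcases Set.mem_insert_iff.1 hx with rfl | ⟨hxT, hxj⟩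
      · exact Set.mem_iInter.2 fun k => by exact_mod_cast hall k
      · refine Set.mem_iInter.2 fun k => ?_
        have hxA : x ∈ A k := by exact_mod_cast Set.mem_iInter.1 hxT k
        exact_mod_cast hAtoF x k hxA (by simpa using hxj)
    have hcard : T.ncard ≤ (insert i (T \ {j})).ncard := by
      have h1 : T ⊆ insert j (T \ {j}) := by
        intro x hx
        by_cases hxj : x = j
        · exact Or.inl hxj
        · exact Or.inr ⟨hx, hxj⟩
      have h2 : T.ncard ≤ (insert j (T \ {j})).ncard :=
        Set.ncard_le_ncard h1 (Set.Finite.insert _ hTfin.diff)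
      have h3 : (insert j (T \ {j})).ncard ≤ (T \ {j}).ncard + 1 :=
        Set.ncard_insert_le _ _
      have h4 : (insert i (T \ {j})).ncard = (T \ {j}).ncard + 1 := by
        rw [Set.ncard_insert_of_notMem (fun hx => hiT hx.1) hTfin.diff]
      omega
    calc t ≤ T.ncard := hTt
      _ ≤ (insert i (T \ {j})).ncard := hcard
      _ ≤ (⋂ k, ((f k : Finset ℕ) : Set ℕ)).ncard := Set.ncard_le_ncard hsub hfinF
  · -- Case 2: some k1 with i ∉ f k1
    push_neg at hall
    obtain ⟨k1, hk1⟩ := hall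
    classical
    set g : Fin r → Finset ℕ := fun k =>
      if i ∉ f k ∧ j ∈ f k then (f k).erase j ∪ {i} else A k with hg
    have hgG : ∀ k, g k ∈ G := by
      intro k
      simp only [hg]
      by_cases hc : i ∉ f k ∧ j ∈ f k
      · rw [if_pos hc]
        have hm : f k = A k := by
          by_contra hm
          obtain ⟨_, _, hfk, _⟩ := hcond k hm
          exact hc.1 (by rw [hfk]; simp)
        exact hkey k hm hc.1 hc.2
      · rw [if_neg hc]; exact hAG k
    have hTt : t ≤ (⋂ k, ((g k : Finset ℕ) : Set ℕ)).ncard := h g hgG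
    set T : Set ℕ := ⋂ k, ((g k : Finset ℕ) : Set ℕ) with hT
    have hiT : i ∉ T := by
      intro hiT
      have : i ∈ g k0 := by exact_mod_cast Set.mem_iInter.1 hiT k0
      rw [hg] at this
      simp only at this
      rw [if_neg (fun hc => hc.1 hif0)] at this
      exact hiA0 this
    have hjT : j ∉ T := by
      intro hjT
      have hjg : j ∈ g k1 := by exact_mod_cast Set.mem_iInter.1 hjT k1
      rw [hg] at hjg
      simp only at hjg
      by_cases hc : i ∉ f k1 ∧ j ∈ f k1
      · rw [if_pos hc] at hjg
        simp only [Finset.mem_union, Finset.mem_erase, Finset.mem_singleton] at hjg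
        rcases hjg with ⟨hne, _⟩ | hji
        · exact hne rfl
        · exact hij hji.symm
      · rw [if_neg hc] at hjg
        have hm : f k1 = A k1 := by
          by_contra hm
          obtain ⟨_, _, hfk, _⟩ := hcond k1 hm
          exact hk1 (by rw [hfk]; simp)
        exact hc ⟨hk1, hm ▸ hjg⟩
    have hsub : T ⊆ ⋂ k, ((f k : Finset ℕ) : Set ℕ) := by
      intro x hx
      have hxi : x ≠ i := fun hxe => hiT (hxe ▸ hx)
      have hxj : x ≠ j := fun hxe => hjT (hxe ▸ hx)
      refine Set.mem_iInter.2 fun k => ?_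
      have hxg : x ∈ g k := by exact_mod_cast Set.mem_iInter.1 hx k
      rw [hg] at hxg
      simp only at hxg
      by_cases hc : i ∉ f k ∧ j ∈ f k
      · rw [if_pos hc] at hxg
        simp only [Finset.mem_union, Finset.mem_erase, Finset.mem_singleton] at hxg
        rcases hxg with ⟨_, hx2⟩ | hxeq
        · exact_mod_cast hx2
        · exact absurd hxeq hxi
      · rw [if_neg hc] at hxg
        exact_mod_cast hAtoF x k hxg hxj
    calc t ≤ T.ncard := hTt
      _ ≤ (⋂ k, ((f k : Finset ℕ) : Set ℕ)).ncard := Set.ncard_le_ncard hsub hfinF
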